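/- For every integer k > 2, there are infinitely many connected highly-regular graphs of valency k which are not distance-regular graphs; equivalently, for every integer k > 2 and every N, there exists a connected k-regular highly-regular graph on more than N vertices which is not a distance-regular graph. -/

import Mathlib

/-- A partition of the vertex set (encoded as a cell-assignment map `P : V → Fin m`)
witnessing that `C` is a collapsed adjacency matrix at the vertex `u`:
the cell of index `0` is exactly `{u}`, every cell is nonempty, and every vertex in
cell `j` has exactly `C i j` neighbours in cell `i`. -/
def IsWitnessingPartition {V : Type*} [Fintype V] (G : SimpleGraph V) {m : ℕ}
    (C : Fin m → Fin m → ℕ) (u : V) (P : V → Fin m) : Prop :=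
  (∀ v : V, (P v : ℕ) = 0 ↔ v = u) ∧
  (∀ t : Fin m, ∃ v : V, P v = t) ∧
  (∀ (i j : Fin m) (y : V), P y = j → {z : V | P z = i ∧ G.Adj y z}.ncard = C i j)

/-- `C` is a collapsed adjacency matrix (CAM) of size `m` for `G`: `2 ≤ m`, `m < n`
(with `m = n` allowed only when `n = 2`), and every vertex admits a witnessing partition. -/
def IsCAM {V : Type*} [Fintype V] (G : SimpleGraph V) {m : ℕ}
    (C : Fin m → Fin m → ℕ) : Prop :=
  2 ≤ m ∧ (m < Fintype.card V ∨ (m = Fintype.card V ∧ Fintype.card V = 2)) ∧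
  ∀ u : V, ∃ P : V → Fin m, IsWitnessingPartition G C u P

/-- A graph is highly-regular if it admits some CAM. -/
def IsHighlyRegular {V : Type*} [Fintype V] (G : SimpleGraph V) : Prop :=
  ∃ (m : ℕ) (C : Fin m → Fin m → ℕ), IsCAM G C

/-- The index of a highly-regular graph: the least size of a CAM. -/
noncomputable def hrIndex {V : Type*} [Fintype V] (G : SimpleGraph V) : ℕ :=
  sInf {m : ℕ | ∃ C : Fin m → Fin m → ℕ, IsCAM G C}

/-- A connected graph is distance-regular if the numbers `|D_1(v) ∩ D_{i-1}(u)|`,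
`|D_1(v) ∩ D_i(u)|`, `|D_1(v) ∩ D_{i+1}(u)|` depend only on `i = d(u,v)`. -/
def IsDistanceRegular {V : Type*} [Fintype V] (G : SimpleGraph V) : Prop :=
  G.Connected ∧ ∀ i : ℕ, 1 ≤ i → i ≤ G.diam →
    ∀ j : ℕ, j = i - 1 ∨ j = i ∨ j = i + 1 →
    ∀ u v x y : V, G.dist u v = i → G.dist x y = i →
      {w : V | G.Adj v w ∧ G.dist u w = j}.ncard =
      {w : V | G.Adj y w ∧ G.dist x w = j}.ncard

namespace HRC

/-- fold of an element of `ZMod n`: distance to `0` on the cycle. -/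
def fold (n : ℕ) (x : ZMod n) : ℕ := min x.val (n - x.val)

/-- membership predicate of the connection-set "shape": `{1,…,t}` plus `n/2` if `k` is odd. -/
def inT (n t k a : ℕ) : Prop := (1 ≤ a ∧ a ≤ t) ∨ (k % 2 = 1 ∧ a = n / 2)

/-- coercion of a vertex of `Fin n` into `ZMod n`. -/
def cc (n : ℕ) (v : Fin n) : ZMod n := (v.val : ZMod n)

/-- the circulant graph. -/
def myG (n t k : ℕ) : SimpleGraph (Fin n) where
  Adj v w := v ≠ w ∧ inT n t k (fold n (cc n w - cc n v)) ∧ inT n t k (fold n (cc n v - cc n w))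
  symm := ⟨by rintro v w ⟨h1, h2, h3⟩; exact ⟨h1.symm, h3, h2⟩⟩
  loopless := ⟨by rintro v ⟨h1, -⟩; exact h1 rfl⟩

section Basic
variable {n t k : ℕ}

lemma fold_zero [NeZero n] : fold n 0 = 0 := by
  unfold fold; rw [ZMod.val_zero]; omega

lemma fold_le_half [NeZero n] (hE : n % 2 = 0) (x : ZMod n) : fold n x ≤ n / 2 := by
  have := x.val_lt; unfold fold; omega

lemma fold_neg [NeZero n] (x : ZMod n) : fold n (-x) = fold n x := by
  have hv := x.val_lt
  unfold fold
  rw [ZMod.neg_val]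
  split_ifs with h
  · rw [h, ZMod.val_zero]
  · have : x.val ≠ 0 := fun hc => h (by
      have : ((x.val : ℕ) : ZMod n) = x := ZMod.natCast_rightInverse x
      rw [← this, hc, Nat.cast_zero])
    omega

lemma fold_natCast (hn : 0 < n) {a : ℕ} (ha : a ≤ n / 2) : fold n ((a : ℕ) : ZMod n) = a := by
  haveI : NeZero n := ⟨hn.ne'⟩
  have hlt : a < n := by omega
  unfold fold; rw [ZMod.val_natCast_of_lt hlt]; omega

lemma fold_eq_iff [NeZero n] {a : ℕ} (ha : a ≤ n / 2) {x : ZMod n} :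
    fold n x = a ↔ (x = ((a : ℕ) : ZMod n) ∨ x = -((a : ℕ) : ZMod n)) := by
  have hn : 0 < n := Nat.pos_of_ne_zero (NeZero.ne n)
  have hv := x.val_lt
  have hself : ((x.val : ℕ) : ZMod n) = x := ZMod.natCast_rightInverse x
  constructor
  · intro h
    unfold fold at h
    rcases Nat.le_total x.val (n - x.val) with hc | hc
    · left
      rw [min_eq_left hc] at h
      rw [← hself, h]
    · rw [min_eq_right hc] at h
      by_cases h0 : x.val = 0
      · left
        have : a = 0 := by omega
        rw [← hself, h0, this, Nat.cast_zero]
      · right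
        have hxa : x.val = n - a := by omega
        rw [← hself, hxa]
        have han : a ≤ n := by omega
        rw [Nat.cast_sub han, ZMod.natCast_self, zero_sub]
  · rintro (rfl | rfl)
    · exact fold_natCast hn ha
    · rw [fold_neg]; exact fold_natCast hn ha

lemma fold_rep [NeZero n] (x : ZMod n) :
    x = ((fold n x : ℕ) : ZMod n) ∨ x = -((fold n x : ℕ) : ZMod n) := by
  have hv := x.val_lt
  have : fold n x ≤ n / 2 ∨ fold n x = n - n/2 ∧ n % 2 = 1 := by unfold fold; omega
  rcases this with h | ⟨h, hodd⟩
  · exact (fold_eq_iff h).mp rfl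
  · -- odd n, fold could exceed n/2 only impossible: min x.val (n-x.val) ≤ n/2 always in fact
    exfalso
    unfold fold at h
    omega

lemma fold_intCast (hn : 0 < n) {c : ℤ} (hc : c.natAbs ≤ n / 2) :
    fold n ((c : ℤ) : ZMod n) = c.natAbs := by
  haveI : NeZero n := ⟨hn.ne'⟩
  obtain ⟨m, rfl | rfl⟩ := Int.eq_nat_or_neg c
  · simp only [Int.natAbs_natCast] at hc ⊢
    push_cast
    exact fold_natCast hn hc
  · simp only [Int.natAbs_neg, Int.natAbs_natCast] at hc ⊢
    push_cast
    rw [fold_neg]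
    exact fold_natCast hn hc

lemma cc_inj [NeZero n] : Function.Injective (cc n) := by
  intro v w h
  have h2 := congrArg ZMod.val h
  unfold cc at h2
  rw [ZMod.val_natCast_of_lt v.isLt, ZMod.val_natCast_of_lt w.isLt] at h2
  exact Fin.ext h2

lemma adj_iff (hn2 : 2 ≤ n) {v w : Fin n} :
    (myG n t k).Adj v w ↔ inT n t k (fold n (cc n w - cc n v)) := by
  haveI : NeZero n := ⟨by omega⟩
  constructor
  · rintro ⟨-, h, -⟩; exact h
  · intro h
    refine ⟨?_, h, ?_⟩
    · rintro rfl
      rw [sub_self, fold_zero] at h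
      unfold inT at h
      omega
    · rw [show cc n v - cc n w = -(cc n w - cc n v) by ring, fold_neg]
      exact h

end Basic

section Counting
variable {n t k : ℕ}

lemma ncard_comap [NeZero n] (Q : ZMod n → Prop) :
    {w : Fin n | Q (cc n w)}.ncard = {x : ZMod n | Q x}.ncard := by
  have himg : {x : ZMod n | Q x} = cc n '' {w : Fin n | Q (cc n w)} := by
    ext x
    simp only [Set.mem_setOf_eq, Set.mem_image]
    constructor
    · intro hx
      have hcc : cc n ⟨x.val, x.val_lt⟩ = x := ZMod.natCast_rightInverse x
      exact ⟨⟨x.val, x.val_lt⟩, by simp only [Set.mem_setOf_eq, hcc]; exact hx, hcc⟩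
    · rintro ⟨w, hw, rfl⟩; exact hw
  rw [himg, Set.ncard_image_of_injective _ cc_inj]

lemma ncard_shift (v0 : ZMod n) (Q : ZMod n → Prop) :
    {x : ZMod n | Q (x - v0)}.ncard = {x : ZMod n | Q x}.ncard := by
  have himg : {x : ZMod n | Q (x - v0)} = (fun x => x + v0) '' {x : ZMod n | Q x} := by
    ext x
    simp only [Set.mem_setOf_eq, Set.mem_image]
    constructor
    · intro hx; exact ⟨x - v0, hx, by ring⟩
    · rintro ⟨y, hy, rfl⟩; simpa using hy
  rw [himg, Set.ncard_image_of_injective _ (add_left_injective v0)]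

lemma ncard_neg (Q : ZMod n → Prop) :
    {x : ZMod n | Q (-x)}.ncard = {x : ZMod n | Q x}.ncard := by
  have himg : {x : ZMod n | Q (-x)} = (fun x => -x) '' {x : ZMod n | Q x} := by
    ext x
    simp only [Set.mem_setOf_eq, Set.mem_image]
    constructor
    · intro hx; exact ⟨-x, hx, by ring⟩
    · rintro ⟨y, hy, rfl⟩; simpa using hy
  rw [himg, Set.ncard_image_of_injective _ neg_injective]

lemma val_count [NeZero n] (F : Finset ℕ) (hF : ∀ b ∈ F, b < n) :
    {x : ZMod n | x.val ∈ F}.ncard = F.card := by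
  have hinj : Set.InjOn (fun b : ℕ => (b : ZMod n)) ↑F := by
    intro a ha b hb hab
    have := congrArg ZMod.val hab
    simp only at this
    rwa [ZMod.val_natCast_of_lt (hF a ha), ZMod.val_natCast_of_lt (hF b hb)] at this
  have himg : {x : ZMod n | x.val ∈ F} = (fun b : ℕ => (b : ZMod n)) '' ↑F := by
    ext x
    simp only [Set.mem_setOf_eq, Set.mem_image, Finset.mem_coe]
    constructor
    · intro hx; exact ⟨x.val, hx, ZMod.natCast_rightInverse x⟩
    · rintro ⟨b, hb, rfl⟩; rwa [ZMod.val_natCast_of_lt (hF b hb)]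
  rw [himg, Set.ncard_image_of_injOn hinj, Set.ncard_coe_finset]

/-- the connection set has exactly `k` elements. -/
lemma card_S (hE : n % 2 = 0) (ht : 1 ≤ t) (hk : k = 2 * t + k % 2) (hbig : 8 * t + 8 ≤ n) :
    {x : ZMod n | inT n t k (fold n x)}.ncard = k := by
  haveI : NeZero n := ⟨by omega⟩
  set F : Finset ℕ :=
    (Finset.Icc 1 t ∪ Finset.Icc (n - t) (n - 1)) ∪
      (if k % 2 = 1 then {n / 2} else ∅) with hF_def
  have hmemF : ∀ b : ℕ, b ∈ F ↔ ((1 ≤ b ∧ b ≤ t) ∨ (n - t ≤ b ∧ b ≤ n - 1) ∨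
      (k % 2 = 1 ∧ b = n / 2)) := by
    intro b
    by_cases hodd : k % 2 = 1 <;>
      simp [hF_def, hodd, Finset.mem_union, Finset.mem_Icc] <;> tauto
  have hset : {x : ZMod n | inT n t k (fold n x)} = {x : ZMod n | x.val ∈ F} := by
    ext x
    have hv := x.val_lt
    simp only [Set.mem_setOf_eq, hmemF, inT, fold]
    omega
  have hF : ∀ b ∈ F, b < n := by
    intro b hb
    rw [hmemF] at hb
    omega
  rw [hset, val_count F hF]
  -- now compute the cardinality of F
  have hd1 : Disjoint (Finset.Icc 1 t) (Finset.Icc (n - t) (n - 1)) := by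
    rw [Finset.disjoint_left]
    intro a ha hb
    rw [Finset.mem_Icc] at ha hb
    omega
  have hc1 : (Finset.Icc 1 t ∪ Finset.Icc (n - t) (n - 1)).card = 2 * t := by
    rw [Finset.card_union_of_disjoint hd1, Nat.card_Icc, Nat.card_Icc]
    omega
  by_cases hodd : k % 2 = 1
  · have hd2 : Disjoint (Finset.Icc 1 t ∪ Finset.Icc (n - t) (n - 1)) ({n / 2} : Finset ℕ) := by
      rw [Finset.disjoint_right]
      intro a ha hb
      rw [Finset.mem_singleton] at ha
      rw [Finset.mem_union, Finset.mem_Icc, Finset.mem_Icc] at hb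
      omega
    rw [hF_def]
    rw [if_pos hodd, Finset.card_union_of_disjoint hd2, hc1, Finset.card_singleton]
    omega
  · rw [hF_def, if_neg hodd, Finset.union_empty, hc1]
    omega

/-- the graph is `k`-regular. -/
lemma degree_eq (hE : n % 2 = 0) (ht : 1 ≤ t) (hk : k = 2 * t + k % 2) (hbig : 8 * t + 8 ≤ n)
    (v : Fin n) : {w : Fin n | (myG n t k).Adj v w}.ncard = k := by
  haveI : NeZero n := ⟨by omega⟩
  have hn2 : 2 ≤ n := by omega
  have hset : {w : Fin n | (myG n t k).Adj v w}
      = {w : Fin n | inT n t k (fold n (cc n w - cc n v))} := by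
    ext w; simp only [Set.mem_setOf_eq, adj_iff hn2]
  rw [hset, ncard_comap (fun x => inT n t k (fold n (x - cc n v))),
    ncard_shift (cc n v) (fun x => inT n t k (fold n x)), card_S hE ht hk hbig]

end Counting

section ConnHR
variable {n t k : ℕ}

/-- embed `ZMod n` back into `Fin n`. -/
def EE (n : ℕ) [NeZero n] (x : ZMod n) : Fin n := ⟨x.val, x.val_lt⟩

lemma cc_EE [NeZero n] (x : ZMod n) : cc n (EE n x) = x := ZMod.natCast_rightInverse x

lemma EE_cc [NeZero n] (v : Fin n) : EE n (cc n v) = v :=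
  cc_inj (cc_EE (cc n v))

lemma connected (hE : n % 2 = 0) (ht : 1 ≤ t) (hbig : 8 * t + 8 ≤ n) :
    (myG n t k).Connected := by
  haveI : NeZero n := ⟨by omega⟩
  have hn2 : 2 ≤ n := by omega
  have key : ∀ (j : ℕ) (u : Fin n), (myG n t k).Reachable u (EE n (cc n u + (j : ℕ))) := by
    intro j
    induction j with
    | zero => intro u; rw [Nat.cast_zero, add_zero, EE_cc]
    | succ j ih =>
      intro u
      refine (ih u).trans (SimpleGraph.Adj.reachable ?_)
      rw [adj_iff hn2, cc_EE, cc_EE]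
      have : cc n u + ((j + 1 : ℕ) : ZMod n) - (cc n u + (j : ℕ)) = ((1 : ℕ) : ZMod n) := by
        push_cast; ring
      rw [this, fold_natCast (by omega) (by omega)]
      left; omega
  rw [SimpleGraph.connected_iff]
  refine ⟨?_, ⟨⟨0, by omega⟩⟩⟩
  intro u v
  have h := key ((cc n v - cc n u).val) u
  have heq : cc n u + (((cc n v - cc n u).val : ℕ) : ZMod n) = cc n v := by
    rw [ZMod.natCast_rightInverse (cc n v - cc n u)]; ring
  rwa [heq, EE_cc] at h

/-- the cell-assignment map around `u`. -/
def PP (n : ℕ) (u v : Fin n) : Fin (n / 2 + 1) :=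
  ⟨min (fold n (cc n v - cc n u)) (n / 2), by omega⟩

/-- the collapsed adjacency matrix. -/
noncomputable def CAMC (n t k : ℕ) : Fin (n / 2 + 1) → Fin (n / 2 + 1) → ℕ := fun i j =>
  {x : ZMod n | fold n x = (i : ℕ) ∧ inT n t k (fold n (x - ((j : ℕ) : ZMod n)))}.ncard

lemma PP_val [NeZero n] (hE : n % 2 = 0) (u v : Fin n) :
    (PP n u v : ℕ) = fold n (cc n v - cc n u) := by
  simp only [PP]
  have := fold_le_half (n := n) hE (cc n v - cc n u)
  omega

lemma highlyRegular (hE : n % 2 = 0) (ht : 1 ≤ t) (hbig : 8 * t + 8 ≤ n) :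
    IsCAM (myG n t k) (CAMC n t k) := by
  haveI : NeZero n := ⟨by omega⟩
  have hn2 : 2 ≤ n := by omega
  refine ⟨by omega, ?_, ?_⟩
  · left; simp only [Fintype.card_fin]; omega
  intro u
  refine ⟨PP n u, ?_, ?_, ?_⟩
  · -- cell 0 is {u}
    intro v
    rw [PP_val hE]
    constructor
    · intro h
      have h2 := (fold_eq_iff (n := n) (a := 0) (by omega)).mp h
      rw [Nat.cast_zero, neg_zero, or_self] at h2
      exact cc_inj (sub_eq_zero.mp h2)
    · rintro rfl; rw [sub_self, fold_zero]
  · -- every cell is nonempty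
    intro t'
    have ht' : (t' : ℕ) ≤ n / 2 := by omega
    refine ⟨EE n (cc n u + ((t' : ℕ) : ZMod n)), ?_⟩
    apply Fin.ext
    rw [PP_val hE, cc_EE, add_sub_cancel_left, fold_natCast (by omega) ht']
  · -- the counting condition
    intro i j y hy
    have hyv : fold n (cc n y - cc n u) = (j : ℕ) := by
      rw [← PP_val hE, hy]
    have hj : (j : ℕ) ≤ n / 2 := by omega
    have hi : (i : ℕ) ≤ n / 2 := by omega
    have hset : {z : Fin n | PP n u z = i ∧ (myG n t k).Adj y z}
        = {z : Fin n | fold n (cc n z - cc n u) = (i : ℕ)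
            ∧ inT n t k (fold n (cc n z - cc n y))} := by
      ext z
      simp only [Set.mem_setOf_eq, adj_iff hn2, Fin.ext_iff, PP_val hE]
    rw [hset]
    rw [ncard_comap (fun x => fold n (x - cc n u) = (i : ℕ)
      ∧ inT n t k (fold n (x - cc n y)))]
    have hsh : {x : ZMod n | fold n (x - cc n u) = (i : ℕ)
        ∧ inT n t k (fold n (x - cc n y))}.ncard
        = {x : ZMod n | fold n x = (i : ℕ)
            ∧ inT n t k (fold n (x - (cc n y - cc n u)))}.ncard := by
      have := ncard_shift (cc n u) (fun x => fold n x = (i : ℕ)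
        ∧ inT n t k (fold n (x - (cc n y - cc n u))))
      rw [← this]
      congr 1
      ext x
      simp only [Set.mem_setOf_eq]
      constructor
      · rintro ⟨h1, h2⟩
        exact ⟨h1, by rwa [show x - cc n u - (cc n y - cc n u) = x - cc n y by ring]⟩
      · rintro ⟨h1, h2⟩
        exact ⟨h1, by rwa [show x - cc n u - (cc n y - cc n u) = x - cc n y by ring] at h2⟩
    rw [hsh]
    rcases (fold_eq_iff hj).mp hyv with hw | hw
    · rw [hw]; rfl
    · rw [hw]
      have hng : {x : ZMod n | fold n x = (i : ℕ)
            ∧ inT n t k (fold n (x - -((j : ℕ) : ZMod n)))}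
          = {x : ZMod n | fold n (-x) = (i : ℕ)
            ∧ inT n t k (fold n (-x - ((j : ℕ) : ZMod n)))} := by
        ext x
        simp only [Set.mem_setOf_eq, fold_neg]
        rw [show -x - ((j : ℕ) : ZMod n) = -(x - -((j : ℕ) : ZMod n)) by ring, fold_neg]
      rw [hng, ncard_neg (fun x => fold n x = (i : ℕ)
        ∧ inT n t k (fold n (x - ((j : ℕ) : ZMod n))))]
      rfl

end ConnHR

section Violation
variable {n t k : ℕ}

lemma fold_intCast' (hn : 0 < n) (c d : ℤ) (hmod : (n : ℤ) ∣ (c - d)) (hd : d.natAbs ≤ n / 2) :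
    fold n ((c : ℤ) : ZMod n) = d.natAbs := by
  have hcd : ((c : ℤ) : ZMod n) = ((d : ℤ) : ZMod n) := by
    have h0 : (((c - d) : ℤ) : ZMod n) = 0 := (ZMod.intCast_zmod_eq_zero_iff_dvd _ n).mpr hmod
    push_cast at h0
    exact sub_eq_zero.mp h0
  rw [hcd, fold_intCast hn hd]

lemma dist_eq_two {V : Type*} {G : SimpleGraph V} {u v w : V} (hne : u ≠ v)
    (hnadj : ¬ G.Adj u v) (h1 : G.Adj u w) (h2 : G.Adj w v) : G.dist u v = 2 := by
  have hle : G.dist u v ≤ 2 := by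
    have := SimpleGraph.dist_le (SimpleGraph.Walk.cons h1 (SimpleGraph.Walk.cons h2
      SimpleGraph.Walk.nil))
    simpa using this
  have h0 : G.dist u v ≠ 0 := by
    intro hc
    rw [SimpleGraph.dist_eq_zero_iff_eq_or_not_reachable] at hc
    rcases hc with hc | hc
    · exact hne hc
    · exact hc ⟨SimpleGraph.Walk.cons h1 (SimpleGraph.Walk.cons h2 SimpleGraph.Walk.nil)⟩
  have h1' : G.dist u v ≠ 1 := fun hc => hnadj (SimpleGraph.dist_eq_one_iff_adj.mp hc)
  omega

lemma half_neg (hE : n % 2 = 0) (hn : 0 < n) :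
    -(((n / 2 : ℕ)) : ZMod n) = ((n / 2 : ℕ) : ZMod n) := by
  haveI : NeZero n := ⟨hn.ne'⟩
  have hadd : ((n / 2 : ℕ) : ZMod n) + ((n / 2 : ℕ) : ZMod n) = 0 := by
    rw [← Nat.cast_add, show n / 2 + n / 2 = n by omega, ZMod.natCast_self]
  exact neg_eq_of_add_eq_zero_left hadd

/-- the key singleton computation: the common neighbours of `0` and `2t` form `{t}`. -/
lemma key_singleton (hE : n % 2 = 0) (ht : 1 ≤ t) (hbig : 8 * t + 8 ≤ n) :
    {x : ZMod n | inT n t k (fold n (x - ((2 * t : ℕ) : ZMod n))) ∧ inT n t k (fold n x)}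
      = {((t : ℕ) : ZMod n)} := by
  haveI : NeZero n := ⟨by omega⟩
  have hn : 0 < n := by omega
  ext x
  simp only [Set.mem_setOf_eq, Set.mem_singleton_iff]
  constructor
  · rintro ⟨h1, h2⟩
    obtain ⟨f, hfeq⟩ : ∃ f, fold n x = f := ⟨_, rfl⟩
    have hf : f ≤ n / 2 := hfeq ▸ fold_le_half hE x
    have hrep := fold_rep x
    rw [hfeq] at hrep h2
    rcases h2 with ⟨hf1, hf2⟩ | ⟨hodd, hfh⟩
    · -- 1 ≤ fold x ≤ t
      rcases hrep with hx | hx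
      · -- x = fold x
        have hx2 : x - ((2 * t : ℕ) : ZMod n)
            = ((((f : ℕ) : ℤ) - 2 * t : ℤ) : ZMod n) := by
          rw [hx]; push_cast; ring
        rw [hx2, fold_intCast' hn _ (-((2 * t - f : ℕ) : ℤ))
          ⟨0, by push_cast; omega⟩
          (by simp only [Int.natAbs_neg, Int.natAbs_natCast]; omega)] at h1
        simp only [Int.natAbs_neg, Int.natAbs_natCast] at h1
        have hft : f = t := by
          rcases h1 with ⟨ha, hb⟩ | ⟨-, hb⟩ <;> omega
        rw [hx, hft]
      · -- x = -(fold x) : contradiction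
        exfalso
        have hx2 : x - ((2 * t : ℕ) : ZMod n)
            = ((-(((f + 2 * t : ℕ) : ℤ)) : ℤ) : ZMod n) := by
          rw [hx]; push_cast; ring
        rw [hx2, fold_intCast' hn _ (-((f + 2 * t : ℕ) : ℤ))
          ⟨0, by push_cast; omega⟩
          (by simp only [Int.natAbs_neg, Int.natAbs_natCast]; omega)] at h1
        simp only [Int.natAbs_neg, Int.natAbs_natCast] at h1
        rcases h1 with ⟨ha, hb⟩ | ⟨-, hb⟩ <;> omega
    · -- fold x = n/2 (k odd) : contradiction
      exfalso
      have hxp : x = ((n / 2 : ℕ) : ZMod n) := by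
        rcases hrep with hx | hx
        · rw [hx, hfh]
        · rw [hx, hfh, half_neg hE hn]
      have hx2 : x - ((2 * t : ℕ) : ZMod n)
          = ((((n / 2 - 2 * t : ℕ) : ℤ)) : ZMod n) := by
        rw [hxp, Int.cast_natCast, Nat.cast_sub (by omega : 2 * t ≤ n / 2)]
      rw [hx2, fold_intCast' hn _ ((n / 2 - 2 * t : ℕ) : ℤ) ⟨0, by ring⟩
        (by simp only [Int.natAbs_natCast]; omega)] at h1
      simp only [Int.natAbs_natCast] at h1
      rcases h1 with ⟨ha, hb⟩ | ⟨-, hb⟩ <;> omega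
  · rintro rfl
    constructor
    · have hx2 : ((t : ℕ) : ZMod n) - ((2 * t : ℕ) : ZMod n)
          = ((-((t : ℕ) : ℤ) : ℤ) : ZMod n) := by push_cast; ring
      rw [hx2, fold_intCast' hn _ (-((t : ℕ) : ℤ)) ⟨0, by ring⟩
        (by simp only [Int.natAbs_neg, Int.natAbs_natCast]; omega)]
      simp only [Int.natAbs_neg, Int.natAbs_natCast]
      left; omega
    · rw [fold_natCast hn (by omega)]
      left; omega

end Violation

section NotDR
variable {n t k : ℕ}

lemma not_DR (hE : n % 2 = 0) (ht : 1 ≤ t) (hpar : k = 2 * t + k % 2) (hk3 : 3 ≤ k)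
    (hbig : 8 * t + 8 ≤ n) : ¬ IsDistanceRegular (myG n t k) := by
  haveI : NeZero n := ⟨by omega⟩
  have hn : 0 < n := by omega
  have hn2 : 2 ≤ n := by omega
  rintro ⟨hconn, hDR⟩
  -- adjacency helpers between embedded naturals
  have adjE : ∀ (a b : ℕ) (d : ℤ), (n : ℤ) ∣ ((b : ℤ) - a - d) → d.natAbs ≤ n / 2 →
      ((myG n t k).Adj (EE n ((a : ℕ) : ZMod n)) (EE n ((b : ℕ) : ZMod n))
        ↔ inT n t k d.natAbs) := by
    intro a b d hdvd hle
    rw [adj_iff hn2, cc_EE, cc_EE]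
    have heq : ((b : ℕ) : ZMod n) - ((a : ℕ) : ZMod n) = (((b : ℤ) - a : ℤ) : ZMod n) := by
      push_cast; ring
    rw [heq, fold_intCast' hn _ d hdvd hle]
  have EEne : ∀ a b : ℕ, a < n → b < n → a ≠ b →
      EE n ((a : ℕ) : ZMod n) ≠ EE n ((b : ℕ) : ZMod n) := by
    intro a b ha hb hab hc
    have := congrArg (cc n) hc
    rw [cc_EE, cc_EE] at this
    have := congrArg ZMod.val this
    rw [ZMod.val_natCast_of_lt ha, ZMod.val_natCast_of_lt hb] at this
    exact hab this
  -- the two distance-two pairs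
  set bB : ℕ := if k % 2 = 1 then n / 2 + 1 else t + 1 with hbB
  have hbBlt : bB < n := by rw [hbB]; split <;> omega
  have hda : (myG n t k).dist (EE n ((0 : ℕ) : ZMod n)) (EE n ((2 * t : ℕ) : ZMod n)) = 2 := by
    refine dist_eq_two (EEne 0 (2 * t) (by omega) (by omega) (by omega)) ?_
      ((adjE 0 t ((t : ℕ) : ℤ) ⟨0, by push_cast; ring⟩
        (by simp only [Int.natAbs_natCast]; omega)).mpr
        (by simp only [Int.natAbs_natCast]; left; omega))
      ((adjE t (2 * t) ((t : ℕ) : ℤ) ⟨0, by push_cast; ring⟩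
        (by simp only [Int.natAbs_natCast]; omega)).mpr
        (by simp only [Int.natAbs_natCast]; left; omega))
    rw [adjE 0 (2 * t) ((2 * t : ℕ) : ℤ) ⟨0, by push_cast; ring⟩
      (by simp only [Int.natAbs_natCast]; omega)]
    simp only [Int.natAbs_natCast]
    rintro (⟨-, hb⟩ | ⟨-, hb⟩) <;> omega
  have hdb : (myG n t k).dist (EE n ((0 : ℕ) : ZMod n)) (EE n ((bB : ℕ) : ZMod n)) = 2 := by
    by_cases hodd : k % 2 = 1
    · have hbBv : bB = n / 2 + 1 := by rw [hbB, if_pos hodd]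
      refine dist_eq_two (EEne 0 bB (by omega) (by omega) (by omega)) ?_
        ((adjE 0 1 ((1 : ℕ) : ℤ) ⟨0, by push_cast; ring⟩
          (by simp only [Int.natAbs_natCast]; omega)).mpr
          (by simp only [Int.natAbs_natCast]; left; omega))
        ((adjE 1 bB ((n / 2 : ℕ) : ℤ) ⟨0, by rw [hbBv]; push_cast; ring⟩
          (by simp only [Int.natAbs_natCast]; omega)).mpr
          (by simp only [Int.natAbs_natCast]; right; exact ⟨hodd, rfl⟩))
      rw [adjE 0 bB (-((n / 2 - 1 : ℕ) : ℤ)) ⟨1, by rw [hbBv]; push_cast; omega⟩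
        (by simp only [Int.natAbs_neg, Int.natAbs_natCast]; omega)]
      simp only [Int.natAbs_neg, Int.natAbs_natCast]
      rintro (⟨-, hb⟩ | ⟨-, hb⟩) <;> omega
    · have hbBv : bB = t + 1 := by rw [hbB, if_neg hodd]
      refine dist_eq_two (EEne 0 bB (by omega) (by omega) (by omega)) ?_
        ((adjE 0 1 ((1 : ℕ) : ℤ) ⟨0, by push_cast; ring⟩
          (by simp only [Int.natAbs_natCast]; omega)).mpr
          (by simp only [Int.natAbs_natCast]; left; omega))
        ((adjE 1 bB ((t : ℕ) : ℤ) ⟨0, by rw [hbBv]; push_cast; ring⟩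
          (by simp only [Int.natAbs_natCast]; omega)).mpr
          (by simp only [Int.natAbs_natCast]; left; omega))
      rw [adjE 0 bB ((t + 1 : ℕ) : ℤ) ⟨0, by rw [hbBv]; push_cast; ring⟩
        (by simp only [Int.natAbs_natCast]; omega)]
      simp only [Int.natAbs_natCast]
      rintro (⟨-, hb⟩ | ⟨-, hb⟩) <;> omega
  -- apply distance-regularity with i = 2, j = 1
  have hediam : (myG n t k).ediam ≠ ⊤ := by
    haveI : Nonempty (Fin n) := ⟨⟨0, by omega⟩⟩
    obtain ⟨p, q, hpq⟩ := SimpleGraph.exists_edist_eq_ediam_of_finite (G := myG n t k)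
    rw [← hpq]
    exact SimpleGraph.edist_ne_top_iff_reachable.mpr (hconn p q)
  have hdiam : 2 ≤ (myG n t k).diam := hda ▸ SimpleGraph.dist_le_diam hediam
  have hcount := hDR 2 (by omega) hdiam 1 (by left; rfl)
    (EE n ((0 : ℕ) : ZMod n)) (EE n ((2 * t : ℕ) : ZMod n))
    (EE n ((0 : ℕ) : ZMod n)) (EE n ((bB : ℕ) : ZMod n)) hda hdb
  -- rewrite `dist = 1` as adjacency
  have hseteq : ∀ v' : Fin n,
      {w : Fin n | (myG n t k).Adj v' w ∧ (myG n t k).dist (EE n ((0 : ℕ) : ZMod n)) w = 1}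
      = {w : Fin n | (myG n t k).Adj v' w ∧ (myG n t k).Adj (EE n ((0 : ℕ) : ZMod n)) w} := by
    intro v'
    ext w
    simp only [Set.mem_setOf_eq, SimpleGraph.dist_eq_one_iff_adj]
  rw [hseteq, hseteq] at hcount
  -- the first count is 1
  have hcA : {w : Fin n | (myG n t k).Adj (EE n ((2 * t : ℕ) : ZMod n)) w
      ∧ (myG n t k).Adj (EE n ((0 : ℕ) : ZMod n)) w}.ncard = 1 := by
    have hset2 : {w : Fin n | (myG n t k).Adj (EE n ((2 * t : ℕ) : ZMod n)) w
        ∧ (myG n t k).Adj (EE n ((0 : ℕ) : ZMod n)) w}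
        = {w : Fin n | inT n t k (fold n (cc n w - ((2 * t : ℕ) : ZMod n)))
            ∧ inT n t k (fold n (cc n w))} := by
      ext w
      simp only [Set.mem_setOf_eq, adj_iff hn2, cc_EE, Nat.cast_zero, sub_zero]
    rw [hset2, ncard_comap (fun x => inT n t k (fold n (x - ((2 * t : ℕ) : ZMod n)))
      ∧ inT n t k (fold n x)), key_singleton hE ht hbig, Set.ncard_singleton]
  -- the second count is at least 2
  have hcB : 1 < {w : Fin n | (myG n t k).Adj (EE n ((bB : ℕ) : ZMod n)) w
      ∧ (myG n t k).Adj (EE n ((0 : ℕ) : ZMod n)) w}.ncard := by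
    rw [Set.one_lt_ncard (Set.toFinite _)]
    by_cases hodd : k % 2 = 1
    · have hbBv : bB = n / 2 + 1 := by rw [hbB, if_pos hodd]
      refine ⟨EE n ((1 : ℕ) : ZMod n), ⟨?_, ?_⟩, EE n ((n / 2 : ℕ) : ZMod n), ⟨?_, ?_⟩, ?_⟩
      · exact (adjE bB 1 (-((n / 2 : ℕ) : ℤ)) ⟨0, by rw [hbBv]; push_cast; ring⟩
          (by simp only [Int.natAbs_neg, Int.natAbs_natCast]; omega)).mpr
          (by simp only [Int.natAbs_neg, Int.natAbs_natCast]; right; exact ⟨hodd, rfl⟩)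
      · exact (adjE 0 1 ((1 : ℕ) : ℤ) ⟨0, by push_cast; ring⟩
          (by simp only [Int.natAbs_natCast]; omega)).mpr
          (by simp only [Int.natAbs_natCast]; left; omega)
      · exact (adjE bB (n / 2) (-((1 : ℕ) : ℤ)) ⟨0, by rw [hbBv]; push_cast; ring⟩
          (by simp only [Int.natAbs_neg, Int.natAbs_natCast]; omega)).mpr
          (by simp only [Int.natAbs_neg, Int.natAbs_natCast]; left; omega)
      · exact (adjE 0 (n / 2) ((n / 2 : ℕ) : ℤ) ⟨0, by push_cast; ring⟩
          (by simp only [Int.natAbs_natCast]; omega)).mpr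
          (by simp only [Int.natAbs_natCast]; right; exact ⟨hodd, rfl⟩)
      · exact EEne 1 (n / 2) (by omega) (by omega) (by omega)
    · have hbBv : bB = t + 1 := by rw [hbB, if_neg hodd]
      have ht2 : 2 ≤ t := by omega
      refine ⟨EE n ((1 : ℕ) : ZMod n), ⟨?_, ?_⟩, EE n ((t : ℕ) : ZMod n), ⟨?_, ?_⟩, ?_⟩
      · exact (adjE bB 1 (-((t : ℕ) : ℤ)) ⟨0, by rw [hbBv]; push_cast; ring⟩
          (by simp only [Int.natAbs_neg, Int.natAbs_natCast]; omega)).mpr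
          (by simp only [Int.natAbs_neg, Int.natAbs_natCast]; left; omega)
      · exact (adjE 0 1 ((1 : ℕ) : ℤ) ⟨0, by push_cast; ring⟩
          (by simp only [Int.natAbs_natCast]; omega)).mpr
          (by simp only [Int.natAbs_natCast]; left; omega)
      · exact (adjE bB t (-((1 : ℕ) : ℤ)) ⟨0, by rw [hbBv]; push_cast; ring⟩
          (by simp only [Int.natAbs_neg, Int.natAbs_natCast]; omega)).mpr
          (by simp only [Int.natAbs_neg, Int.natAbs_natCast]; left; omega)
      · exact (adjE 0 t ((t : ℕ) : ℤ) ⟨0, by push_cast; ring⟩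
          (by simp only [Int.natAbs_natCast]; omega)).mpr
          (by simp only [Int.natAbs_natCast]; left; omega)
      · exact EEne 1 t (by omega) (by omega) (by omega)
  rw [← hcount, hcA] at hcB
  exact lt_irrefl 1 hcB

end NotDR

end HRC

/-- For every `k > 2` there are infinitely many connected highly-regular
graphs of valency `k` which are not distance-regular: for every `N` there is one on
more than `N` vertices. -/
theorem stmt17 (k : ℕ) (hk : 2 < k) (N : ℕ) :
    ∃ n : ℕ, N < n ∧ ∃ G : SimpleGraph (Fin n), G.Connected ∧ IsHighlyRegular G ∧
      (∀ v : Fin n, {w : Fin n | G.Adj v w}.ncard = k) ∧ ¬ IsDistanceRegular G := by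
  set t := k / 2 with ht_def
  have hpar : k = 2 * t + k % 2 := by omega
  have ht : 1 ≤ t := by omega
  set n := 2 * (N + 4 * t + 4) with hn_def
  have hE : n % 2 = 0 := by omega
  have hbig : 8 * t + 8 ≤ n := by omega
  refine ⟨n, by omega, HRC.myG n t k, HRC.connected hE ht hbig, ?_, ?_, ?_⟩
  · exact ⟨n / 2 + 1, HRC.CAMC n t k, HRC.highlyRegular hE ht hbig⟩
  · exact HRC.degree_eq hE ht hpar hbig
  · exact HRC.not_DR hE ht hpar (by omega) hbig
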